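/- Let V be a d-dimensional F_q-vector space and V* its dual. For a function f : V → ℚ define (T_V f)(φ) = ((−1)^d / (q − 1)) · Σ_{v ∈ V} ξ(φ(v)) f(v) on V*, and for g : V* → ℚ define (T_{V*} g)(v) = ((−1)^d / (q − 1)) · Σ_{φ ∈ V*} ξ(φ(v)) g(φ) on V (using the evaluation pairing). If f is F_qˣ-invariant, i.e. f(t·v) = f(v) for all t ∈ F_qˣ and v ∈ V, then T_{V*}(T_V f) = q^d · f. -/

import Mathlib

open Finset
open scoped Classical

section Aux

variable (F : Type*) [Field F] [Fintype F]

private lemma xi_total_sum :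
    ∑ x : F, (if x = (0:F) then (Fintype.card F : ℚ) - 1 else -1) = 0 := by
  rw [← Finset.add_sum_erase _ _ (Finset.mem_univ (0:F))]
  rw [if_pos rfl]
  have h1 : ∀ x ∈ (Finset.univ : Finset F).erase 0,
      (if x = (0:F) then (Fintype.card F : ℚ) - 1 else -1) = -1 := by
    intro x hx
    rw [if_neg (Finset.ne_of_mem_erase hx)]
  rw [Finset.sum_congr rfl h1, Finset.sum_const, Finset.card_erase_of_mem (Finset.mem_univ _),
    Finset.card_univ]
  have hcard : 1 ≤ Fintype.card F := Fintype.card_pos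
  rw [nsmul_eq_mul, Nat.cast_sub hcard]
  push_cast
  ring

end Aux

/-- Involutivity of the homogeneous arithmetic Fourier transform: if f : V → ℚ is
F_qˣ-invariant, then T_{V*}(T_V f) = q^d · f. -/
theorem stmt4 (F V : Type*) [Field F] [Fintype F] [AddCommGroup V] [Module F V]
    [Fintype V] [Fintype (V →ₗ[F] F)] (f : V → ℚ)
    (hf : ∀ (t : Fˣ) (v : V), f ((t : F) • v) = f v) (v : V) :
    ((-1 : ℚ) ^ (Module.finrank F V) / ((Fintype.card F : ℚ) - 1)) *
      ∑ φ : V →ₗ[F] F, (if φ v = 0 then (Fintype.card F : ℚ) - 1 else -1) *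
        (((-1 : ℚ) ^ (Module.finrank F V) / ((Fintype.card F : ℚ) - 1)) *
          ∑ w : V, (if φ w = 0 then (Fintype.card F : ℚ) - 1 else -1) * f w) =
    (Fintype.card F : ℚ) ^ (Module.finrank F V) * f v := by
  classical
  set d := Module.finrank F V with hd
  set ξ : F → ℚ := fun x => if x = 0 then (Fintype.card F : ℚ) - 1 else -1 with hξ
  set c : ℚ := (-1 : ℚ) ^ d / ((Fintype.card F : ℚ) - 1) with hc
  have hq1 : (1 : ℚ) < (Fintype.card F : ℚ) := by
    exact_mod_cast Fintype.one_lt_card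
  have hqne : ((Fintype.card F : ℚ) - 1) ≠ 0 := by linarith
  have hq0 : (Fintype.card F : ℚ) ≠ 0 := by positivity
  -- total sum of ξ over F is 0
  have key0 : ∑ x : F, ξ x = 0 := xi_total_sum F
  -- cardinality of the dual
  have hcard : (Fintype.card (V →ₗ[F] F) : ℚ) = (Fintype.card F : ℚ) ^ d := by
    have h1 : Fintype.card (V →ₗ[F] F) = Fintype.card F ^ Module.finrank F (V →ₗ[F] F) :=
      Module.card_eq_pow_finrank
    have h2 : Module.finrank F (V →ₗ[F] F) = Module.finrank F V := Subspace.dual_finrank_eq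
    rw [h1, h2, ← hd]
    push_cast
    ring
  -- sum of ξ (φ u) over the dual vanishes for u ≠ 0
  have keyB : ∀ u : V, u ≠ 0 → ∑ φ : V →ₗ[F] F, ξ (φ u) = 0 := by
    intro u hu
    obtain ⟨ψ, hψ⟩ : ∃ ψ : V →ₗ[F] F, ψ u = 1 := by
      have : ¬ (∀ φ : Module.Dual F V, φ u = 0) := by
        rw [Module.forall_dual_apply_eq_zero_iff]; exact hu
      push_neg at this
      obtain ⟨φ, hφ⟩ := this
      exact ⟨(φ u)⁻¹ • φ, by simp [inv_mul_cancel₀ hφ]⟩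
    have h1 : ∀ b : F, ∑ φ : V →ₗ[F] F, ξ ((φ + b • ψ) u) = ∑ φ : V →ₗ[F] F, ξ (φ u) :=
      fun b => Equiv.sum_comp (Equiv.addRight (b • ψ)) (fun φ => ξ (φ u))
    have h2 : ∀ φ : V →ₗ[F] F, ∑ b : F, ξ ((φ + b • ψ) u) = 0 := by
      intro φ
      have e1 : ∀ b : F, (φ + b • ψ) u = φ u + b := by
        intro b; simp [hψ]
      calc ∑ b : F, ξ ((φ + b • ψ) u) = ∑ b : F, ξ (φ u + b) := by
            exact Finset.sum_congr rfl fun b _ => by rw [e1]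
        _ = ∑ x : F, ξ x := Equiv.sum_comp (Equiv.addLeft (φ u)) ξ
        _ = 0 := key0
    have h3 : (Fintype.card F : ℚ) * ∑ φ : V →ₗ[F] F, ξ (φ u) = 0 := by
      calc (Fintype.card F : ℚ) * ∑ φ : V →ₗ[F] F, ξ (φ u)
          = ∑ _b : F, ∑ φ : V →ₗ[F] F, ξ (φ u) := by
            rw [Finset.sum_const, Finset.card_univ, nsmul_eq_mul]
        _ = ∑ b : F, ∑ φ : V →ₗ[F] F, ξ ((φ + b • ψ) u) := by
            exact Finset.sum_congr rfl fun b _ => (h1 b).symm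
        _ = ∑ φ : V →ₗ[F] F, ∑ b : F, ξ ((φ + b • ψ) u) := Finset.sum_comm
        _ = 0 := Finset.sum_eq_zero fun φ _ => h2 φ
    exact (mul_eq_zero.mp h3).resolve_left hq0
  -- the value of the dual sum in general
  have keyD : ∀ u : V, ∑ φ : V →ₗ[F] F, ξ (φ u) =
      if u = 0 then ((Fintype.card F : ℚ) - 1) * (Fintype.card F : ℚ) ^ d else 0 := by
    intro u
    by_cases hu : u = 0
    · subst hu
      rw [if_pos rfl]
      have : ∀ φ : V →ₗ[F] F, ξ (φ 0) = (Fintype.card F : ℚ) - 1 := by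
        intro φ; simp [hξ]
      rw [Finset.sum_congr rfl fun φ _ => this φ, Finset.sum_const, Finset.card_univ,
        nsmul_eq_mul, hcard]
      ring
    · rw [if_neg hu]; exact keyB u hu
  -- multiplicativity identity for ξ
  have keyC : ∀ a b : F, ξ a * ξ b = ∑ t ∈ (Finset.univ : Finset F).erase 0, ξ (a - t * b) := by
    intro a b
    by_cases hb : b = 0
    · subst hb
      have h1 : ∀ t ∈ (Finset.univ : Finset F).erase 0, ξ (a - t * 0) = ξ a := by
        intro t _; rw [mul_zero, sub_zero]
      rw [Finset.sum_congr rfl h1, Finset.sum_const,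
        Finset.card_erase_of_mem (Finset.mem_univ _), Finset.card_univ, nsmul_eq_mul]
      have hcard1 : 1 ≤ Fintype.card F := Fintype.card_pos
      have hξ0 : ξ 0 = (Fintype.card F : ℚ) - 1 := by simp [hξ]
      rw [hξ0, Nat.cast_sub hcard1]
      push_cast
      ring
    · have hbij : Function.Bijective (fun t : F => a - t * b) := by
        apply Finite.injective_iff_bijective.mp
        intro s t hst
        simp only [sub_right_inj] at hst
        exact mul_right_cancel₀ hb hst
      have htot : ∑ t : F, ξ (a - t * b) = 0 := by
        rw [Fintype.sum_bijective _ hbij _ ξ (fun t => rfl)]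
        exact key0
      have hsplit : ξ (a - 0 * b) + ∑ t ∈ (Finset.univ : Finset F).erase 0, ξ (a - t * b)
          = ∑ t : F, ξ (a - t * b) :=
        Finset.add_sum_erase _ (fun t : F => ξ (a - t * b)) (Finset.mem_univ (0:F))
      have hξb : ξ b = -1 := by simp [hξ, hb]
      rw [hξb]
      have : ξ (a - 0 * b) = ξ a := by rw [zero_mul, sub_zero]
      rw [this] at hsplit
      linarith [hsplit, htot]
  have hA : ((Fintype.card F : ℚ) - 1) * (Fintype.card F : ℚ) ^ d
      = ((Fintype.card F : ℚ) - 1) * (Fintype.card F : ℚ) ^ d := rfl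
  have hcarderase : (((Finset.univ : Finset F).erase 0).card : ℚ)
      = (Fintype.card F : ℚ) - 1 := by
    rw [Finset.card_erase_of_mem (Finset.mem_univ _), Finset.card_univ,
      Nat.cast_sub Fintype.card_pos]
    push_cast; ring
  have hneg : ((-1 : ℚ) ^ d) * ((-1 : ℚ) ^ d) = 1 := by
    rw [← pow_add]
    exact Even.neg_one_pow ⟨d, rfl⟩
  -- now the main computation
  show c * ∑ φ : V →ₗ[F] F, ξ (φ v) * (c * ∑ w : V, ξ (φ w) * f w)
      = (Fintype.card F : ℚ) ^ d * f v
  calc c * ∑ φ : V →ₗ[F] F, ξ (φ v) * (c * ∑ w : V, ξ (φ w) * f w)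
      = ∑ φ : V →ₗ[F] F, ∑ w : V, (c * c) * ((ξ (φ v) * ξ (φ w)) * f w) := by
        rw [Finset.mul_sum]
        refine Finset.sum_congr rfl fun φ _ => ?_
        rw [Finset.mul_sum, Finset.mul_sum, Finset.mul_sum]
        exact Finset.sum_congr rfl fun w _ => by ring
    _ = ∑ w : V, ∑ φ : V →ₗ[F] F, (c * c) * ((ξ (φ v) * ξ (φ w)) * f w) := Finset.sum_comm
    _ = ∑ w : V, (c * c) * f w * ∑ t ∈ (Finset.univ : Finset F).erase 0,
          ∑ φ : V →ₗ[F] F, ξ (φ (v - t • w)) := by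
        refine Finset.sum_congr rfl fun w _ => ?_
        calc ∑ φ : V →ₗ[F] F, (c * c) * ((ξ (φ v) * ξ (φ w)) * f w)
            = ∑ φ : V →ₗ[F] F, ∑ t ∈ (Finset.univ : Finset F).erase 0,
                (c * c * f w) * ξ (φ (v - t • w)) := by
              refine Finset.sum_congr rfl fun φ _ => ?_
              rw [show (c * c) * ((ξ (φ v) * ξ (φ w)) * f w)
                  = (c * c * f w) * (ξ (φ v) * ξ (φ w)) from by ring, keyC, Finset.mul_sum]
              refine Finset.sum_congr rfl fun t _ => ?_
              rw [show φ (v - t • w) = φ v - t * φ w from by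
                rw [map_sub, map_smul, smul_eq_mul]]
          _ = ∑ t ∈ (Finset.univ : Finset F).erase 0, ∑ φ : V →ₗ[F] F,
                (c * c * f w) * ξ (φ (v - t • w)) := Finset.sum_comm
          _ = (c * c) * f w * ∑ t ∈ (Finset.univ : Finset F).erase 0,
                ∑ φ : V →ₗ[F] F, ξ (φ (v - t • w)) := by
              rw [Finset.mul_sum]
              exact Finset.sum_congr rfl fun t _ => (Finset.mul_sum _ _ _).symm
    _ = ∑ w : V, ∑ t ∈ (Finset.univ : Finset F).erase 0,
          (if w = t⁻¹ • v then (c * c) * f w * (((Fintype.card F : ℚ) - 1)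
            * (Fintype.card F : ℚ) ^ d) else 0) := by
        refine Finset.sum_congr rfl fun w _ => ?_
        rw [Finset.mul_sum]
        refine Finset.sum_congr rfl fun t ht => ?_
        have ht0 : t ≠ 0 := Finset.ne_of_mem_erase ht
        rw [keyD (v - t • w)]
        have hiff : v - t • w = 0 ↔ w = t⁻¹ • v := by
          rw [sub_eq_zero, eq_inv_smul_iff₀ ht0, eq_comm]
        rw [if_congr hiff rfl rfl, mul_ite, mul_zero]
    _ = ∑ t ∈ (Finset.univ : Finset F).erase 0, ∑ w : V,
          (if w = t⁻¹ • v then (c * c) * f w * (((Fintype.card F : ℚ) - 1)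
            * (Fintype.card F : ℚ) ^ d) else 0) := Finset.sum_comm
    _ = ∑ t ∈ (Finset.univ : Finset F).erase 0,
          (c * c) * f v * (((Fintype.card F : ℚ) - 1) * (Fintype.card F : ℚ) ^ d) := by
        refine Finset.sum_congr rfl fun t ht => ?_
        have ht0 : t ≠ 0 := Finset.ne_of_mem_erase ht
        rw [Finset.sum_ite_eq' Finset.univ (t⁻¹ • v)
          (fun w => (c * c) * f w * (((Fintype.card F : ℚ) - 1) * (Fintype.card F : ℚ) ^ d))]
        rw [if_pos (Finset.mem_univ _)]
        have hfv : f (t⁻¹ • v) = f v := by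
          have := hf (Units.mk0 t ht0)⁻¹ v
          simpa using this
        rw [hfv]
    _ = (Fintype.card F : ℚ) ^ d * f v := by
        have hcc : c * c = 1 / (((Fintype.card F : ℚ) - 1) ^ 2) := by
          rw [hc, div_mul_div_comm, hneg]
          ring_nf
        rw [Finset.sum_const, nsmul_eq_mul, hcarderase, hcc]
        field_simp
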